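/- Let l₁, l₂, l₃ ∈ (0, π) satisfy the strict triangle inequalities (each one is less than the sum of the other two) and l₁ + l₂ + l₃ < 2π. Then there exist unit vectors u, v, w in the Euclidean space ℝ³ that are linearly independent and satisfy ⟨v, w⟩ = cos l₁, ⟨u, w⟩ = cos l₂, ⟨u, v⟩ = cos l₃ (i.e., the pairwise spherical distances are l₁, l₂, l₃). Moreover, such a triple is unique up to a linear isometry: if (u′, v′, w′) is another triple of unit vectors with the same pairwise inner products, then there is a linear isometric equivalence of ℝ³ taking u to u′, v to v′, and w to w′. -/

import Mathlib

open Real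
open scoped RealInnerProductSpace

lemma gram_pos (l₁ l₂ l₃ : ℝ)
    (h₁ : l₁ ∈ Set.Ioo (0 : ℝ) π) (h₂ : l₂ ∈ Set.Ioo (0 : ℝ) π) (h₃ : l₃ ∈ Set.Ioo (0 : ℝ) π)
    (t₁ : l₁ < l₂ + l₃) (t₂ : l₂ < l₁ + l₃) (t₃ : l₃ < l₁ + l₂)
    (hsum : l₁ + l₂ + l₃ < 2 * π) :
    0 < 1 + 2 * cos l₁ * cos l₂ * cos l₃ - cos l₁ ^ 2 - cos l₂ ^ 2 - cos l₃ ^ 2 := by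
  have key : 1 + 2 * cos l₁ * cos l₂ * cos l₃ - cos l₁ ^ 2 - cos l₂ ^ 2 - cos l₃ ^ 2
      = (cos (l₂ - l₃) - cos l₁) * (cos l₁ - cos (l₂ + l₃)) := by
    rw [Real.cos_sub, Real.cos_add]
    linear_combination (Real.cos l₃ ^ 2 - 1) * Real.sin_sq_add_cos_sq l₂
      - Real.sin l₂ ^ 2 * Real.sin_sq_add_cos_sq l₃
  rw [key]
  have f1 : cos l₁ < cos (l₂ - l₃) := by
    rcases le_total l₃ l₂ with h | h
    · exact Real.cos_lt_cos_of_nonneg_of_le_pi (by linarith) h₁.2.le (by linarith)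
    · rw [show l₂ - l₃ = -(l₃ - l₂) by ring, Real.cos_neg]
      exact Real.cos_lt_cos_of_nonneg_of_le_pi (by linarith) h₁.2.le (by linarith)
  have f2 : cos (l₂ + l₃) < cos l₁ := by
    rcases le_total (l₂ + l₃) π with h | h
    · exact Real.cos_lt_cos_of_nonneg_of_le_pi h₁.1.le h (by linarith)
    · rw [show l₂ + l₃ = 2 * π - (2 * π - (l₂ + l₃)) by ring, Real.cos_two_pi_sub]
      exact Real.cos_lt_cos_of_nonneg_of_le_pi h₁.1.le (by linarith) (by linarith)
  nlinarith

lemma li_of_gram (c₁ c₂ c₃ : ℝ)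
    (hG : 1 + 2 * c₁ * c₂ * c₃ - c₁ ^ 2 - c₂ ^ 2 - c₃ ^ 2 ≠ 0)
    (u v w : EuclideanSpace ℝ (Fin 3))
    (hu : ‖u‖ = 1) (hv : ‖v‖ = 1) (hw : ‖w‖ = 1)
    (hvw : ⟪v, w⟫ = c₁) (huw : ⟪u, w⟫ = c₂) (huv : ⟪u, v⟫ = c₃) :
    LinearIndependent ℝ ![u, v, w] := by
  have hu2 : ⟪u, u⟫ = 1 := by rw [real_inner_self_eq_norm_sq, hu]; norm_num
  have hv2 : ⟪v, v⟫ = 1 := by rw [real_inner_self_eq_norm_sq, hv]; norm_num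
  have hw2 : ⟪w, w⟫ = 1 := by rw [real_inner_self_eq_norm_sq, hw]; norm_num
  have hwv : ⟪w, v⟫ = c₁ := by rw [real_inner_comm]; exact hvw
  have hwu : ⟪w, u⟫ = c₂ := by rw [real_inner_comm]; exact huw
  have hvu : ⟪v, u⟫ = c₃ := by rw [real_inner_comm]; exact huv
  set M : Matrix (Fin 3) (Fin 3) ℝ := !![1, c₃, c₂; c₃, 1, c₁; c₂, c₁, 1] with hM
  have hdet : M.det ≠ 0 := by
    rw [hM, Matrix.det_fin_three]
    simp only [Matrix.cons_val', Matrix.cons_val_zero, Matrix.cons_val_one, Matrix.head_cons,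
      Matrix.empty_val', Matrix.cons_val_fin_one, Matrix.head_fin_const, Matrix.cons_val_two,
      Matrix.tail_cons, Matrix.of_apply]
    intro h; apply hG; nlinarith [h]
  rw [Fintype.linearIndependent_iff]
  intro g hg
  have key : ∀ a : EuclideanSpace ℝ (Fin 3), ⟪a, ∑ i : Fin 3, g i • ![u, v, w] i⟫ = 0 :=
    fun a => by rw [hg, inner_zero_right]
  have h0 := key u
  have h1 := key v
  have h2 := key w
  simp only [inner_add_right, real_inner_smul_right, Fin.sum_univ_three, Matrix.cons_val_zero,
    Matrix.cons_val_one, Matrix.head_cons, Matrix.cons_val_two, Matrix.tail_cons] at h0 h1 h2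
  rw [hu2, huv, huw] at h0
  rw [hvu, hv2, hvw] at h1
  rw [hwu, hwv, hw2] at h2
  have hMg : M.mulVec g = 0 := by
    funext j
    fin_cases j <;>
      [show (1*g 0 + (c₃*g 1 + (c₂*g 2 + 0))) = 0; show (c₃*g 0 + (1*g 1 + (c₁*g 2 + 0))) = 0;
       show (c₂*g 0 + (c₁*g 1 + (1*g 2 + 0))) = 0] <;> linarith
  have := Matrix.eq_zero_of_mulVec_eq_zero hdet hMg
  exact fun i => congrFun this i

lemma exists_triple (c₁ c₂ c₃ s₃ : ℝ) (hs₃ : 0 < s₃) (hc₃ : c₃ ^ 2 + s₃ ^ 2 = 1)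
    (hG : 0 < 1 + 2 * c₁ * c₂ * c₃ - c₁ ^ 2 - c₂ ^ 2 - c₃ ^ 2) :
    ∃ u v w : EuclideanSpace ℝ (Fin 3),
      ‖u‖ = 1 ∧ ‖v‖ = 1 ∧ ‖w‖ = 1 ∧
      ⟪v, w⟫ = c₁ ∧ ⟪u, w⟫ = c₂ ∧ ⟪u, v⟫ = c₃ := by
  set a : ℝ := (c₁ - c₂ * c₃) / s₃ with ha
  have hD : 0 < 1 - c₂ ^ 2 - a ^ 2 := by
    have : 1 - c₂ ^ 2 - a ^ 2 = (1 + 2 * c₁ * c₂ * c₃ - c₁ ^ 2 - c₂ ^ 2 - c₃ ^ 2) / s₃ ^ 2 := by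
      rw [ha]; field_simp; nlinarith [hc₃]
    rw [this]; positivity
  set b : ℝ := Real.sqrt (1 - c₂ ^ 2 - a ^ 2) with hb
  have hb2 : b ^ 2 = 1 - c₂ ^ 2 - a ^ 2 := Real.sq_sqrt hD.le
  refine ⟨WithLp.toLp 2 ![1, 0, 0], WithLp.toLp 2 ![c₃, s₃, 0], WithLp.toLp 2 ![c₂, a, b], ?_, ?_, ?_, ?_, ?_, ?_⟩
  · rw [EuclideanSpace.norm_eq]
    simp [Fin.sum_univ_three, PiLp.toLp_apply]
  · rw [EuclideanSpace.norm_eq]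
    simp only [Fin.sum_univ_three, Matrix.cons_val_zero, Matrix.cons_val_one, Matrix.head_cons,
      Matrix.cons_val_two, Matrix.tail_cons, Real.norm_eq_abs, sq_abs, PiLp.toLp_apply]
    rw [show c₃ ^ 2 + s₃ ^ 2 + 0 ^ 2 = 1 by nlinarith [hc₃], Real.sqrt_one]
  · rw [EuclideanSpace.norm_eq]
    simp only [Fin.sum_univ_three, Matrix.cons_val_zero, Matrix.cons_val_one, Matrix.head_cons,
      Matrix.cons_val_two, Matrix.tail_cons, Real.norm_eq_abs, sq_abs, PiLp.toLp_apply]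
    rw [show c₂ ^ 2 + a ^ 2 + b ^ 2 = 1 by rw [hb2]; ring, Real.sqrt_one]
  · simp only [PiLp.inner_apply, RCLike.inner_apply, conj_trivial, Fin.sum_univ_three,
      Matrix.cons_val_zero, Matrix.cons_val_one, Matrix.head_cons, Matrix.cons_val_two,
      Matrix.tail_cons, PiLp.toLp_apply]
    rw [ha]; field_simp; ring
  · simp only [PiLp.inner_apply, RCLike.inner_apply, conj_trivial, Fin.sum_univ_three,
      Matrix.cons_val_zero, Matrix.cons_val_one, Matrix.head_cons, Matrix.cons_val_two,
      Matrix.tail_cons, PiLp.toLp_apply]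
    ring
  · simp only [PiLp.inner_apply, RCLike.inner_apply, conj_trivial, Fin.sum_univ_three,
      Matrix.cons_val_zero, Matrix.cons_val_one, Matrix.head_cons, Matrix.cons_val_two,
      Matrix.tail_cons, PiLp.toLp_apply]
    ring

lemma unique_triple (c₁ c₂ c₃ : ℝ)
    (hG : 1 + 2 * c₁ * c₂ * c₃ - c₁ ^ 2 - c₂ ^ 2 - c₃ ^ 2 ≠ 0)
    (u v w u' v' w' : EuclideanSpace ℝ (Fin 3))
    (hu : ‖u‖ = 1) (hv : ‖v‖ = 1) (hw : ‖w‖ = 1)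
    (hvw : ⟪v, w⟫ = c₁) (huw : ⟪u, w⟫ = c₂) (huv : ⟪u, v⟫ = c₃)
    (hu' : ‖u'‖ = 1) (hv' : ‖v'‖ = 1) (hw' : ‖w'‖ = 1)
    (hvw' : ⟪v', w'⟫ = c₁) (huw' : ⟪u', w'⟫ = c₂) (huv' : ⟪u', v'⟫ = c₃) :
    ∃ f : EuclideanSpace ℝ (Fin 3) ≃ₗᵢ[ℝ] EuclideanSpace ℝ (Fin 3),
      f u = u' ∧ f v = v' ∧ f w = w' := by
  have hli := li_of_gram c₁ c₂ c₃ hG u v w hu hv hw hvw huw huv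
  have hli' := li_of_gram c₁ c₂ c₃ hG u' v' w' hu' hv' hw' hvw' huw' huv'
  have hcard : Fintype.card (Fin 3) = Module.finrank ℝ (EuclideanSpace ℝ (Fin 3)) := by
    simp [finrank_euclideanSpace_fin]
  set b := basisOfLinearIndependentOfCardEqFinrank hli hcard with hbdef
  set b' := basisOfLinearIndependentOfCardEqFinrank hli' hcard with hbdef'
  have hbi : ⇑b = ![u, v, w] := coe_basisOfLinearIndependentOfCardEqFinrank _ _
  have hbi' : ⇑b' = ![u', v', w'] := coe_basisOfLinearIndependentOfCardEqFinrank _ _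
  set e := b.equiv b' (Equiv.refl _) with hedef
  have heb : ∀ i, e (b i) = b' i := fun i => b.equiv_apply i b' (Equiv.refl _)
  have key : ∀ i j : Fin 3, ⟪e (b i), e (b j)⟫ = ⟪b i, b j⟫ := by
    intro i j
    rw [heb i, heb j]
    have hu2 : ⟪u, u⟫ = 1 := by rw [real_inner_self_eq_norm_sq, hu]; norm_num
    have hv2 : ⟪v, v⟫ = 1 := by rw [real_inner_self_eq_norm_sq, hv]; norm_num
    have hw2 : ⟪w, w⟫ = 1 := by rw [real_inner_self_eq_norm_sq, hw]; norm_num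
    have hu2' : ⟪u', u'⟫ = 1 := by rw [real_inner_self_eq_norm_sq, hu']; norm_num
    have hv2' : ⟪v', v'⟫ = 1 := by rw [real_inner_self_eq_norm_sq, hv']; norm_num
    have hw2' : ⟪w', w'⟫ = 1 := by rw [real_inner_self_eq_norm_sq, hw']; norm_num
    have hwv : ⟪w, v⟫ = c₁ := by rw [real_inner_comm]; exact hvw
    have hwu : ⟪w, u⟫ = c₂ := by rw [real_inner_comm]; exact huw
    have hvu : ⟪v, u⟫ = c₃ := by rw [real_inner_comm]; exact huv
    have hwv' : ⟪w', v'⟫ = c₁ := by rw [real_inner_comm]; exact hvw'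
    have hwu' : ⟪w', u'⟫ = c₂ := by rw [real_inner_comm]; exact huw'
    have hvu' : ⟪v', u'⟫ = c₃ := by rw [real_inner_comm]; exact huv'
    fin_cases i <;> fin_cases j <;>
      simp [hbi, hbi', hu2, hv2, hw2, hu2', hv2', hw2', hvw, huw, huv, hvw', huw', huv',
        hwv, hwu, hvu, hwv', hwu', hvu', hu, hv, hw, hu', hv', hw']
  have main : ∀ x y : EuclideanSpace ℝ (Fin 3), ⟪e x, e y⟫ = ⟪x, y⟫ := by
    intro x y
    rw [← b.sum_repr x, ← b.sum_repr y]
    simp only [map_sum, map_smul, sum_inner, inner_sum, real_inner_smul_left,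
      real_inner_smul_right]
    exact Finset.sum_congr rfl fun i _ => Finset.sum_congr rfl fun j _ => by rw [key j i]
  refine ⟨e.isometryOfInner main, ?_, ?_, ?_⟩
  · have h1 : b 0 = u := by rw [hbi]; rfl
    have h2 : b' 0 = u' := by rw [hbi']; rfl
    show e u = u'
    rw [← h1, heb 0, h2]
  · have h1 : b 1 = v := by rw [hbi]; rfl
    have h2 : b' 1 = v' := by rw [hbi']; rfl
    show e v = v'
    rw [← h1, heb 1, h2]
  · have h1 : b 2 = w := by rw [hbi]; rfl
    have h2 : b' 2 = w' := by rw [hbi']; rfl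
    show e w = w'
    rw [← h1, heb 2, h2]

/-- Existence and uniqueness (up to a linear isometry) of a convex spherical triangle with
prescribed side lengths `l₁, l₂, l₃ ∈ (0, π)` satisfying the strict triangle inequalities
and `l₁ + l₂ + l₃ < 2π`. -/
theorem spherical_triangle_realization (l₁ l₂ l₃ : ℝ)
    (h₁ : l₁ ∈ Set.Ioo (0 : ℝ) π) (h₂ : l₂ ∈ Set.Ioo (0 : ℝ) π) (h₃ : l₃ ∈ Set.Ioo (0 : ℝ) π)
    (t₁ : l₁ < l₂ + l₃) (t₂ : l₂ < l₁ + l₃) (t₃ : l₃ < l₁ + l₂)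
    (hsum : l₁ + l₂ + l₃ < 2 * π) :
    (∃ u v w : EuclideanSpace ℝ (Fin 3),
      ‖u‖ = 1 ∧ ‖v‖ = 1 ∧ ‖w‖ = 1 ∧
      LinearIndependent ℝ ![u, v, w] ∧
      ⟪v, w⟫ = Real.cos l₁ ∧ ⟪u, w⟫ = Real.cos l₂ ∧ ⟪u, v⟫ = Real.cos l₃) ∧
    (∀ u v w u' v' w' : EuclideanSpace ℝ (Fin 3),
      ‖u‖ = 1 → ‖v‖ = 1 → ‖w‖ = 1 →
      ⟪v, w⟫ = Real.cos l₁ → ⟪u, w⟫ = Real.cos l₂ → ⟪u, v⟫ = Real.cos l₃ →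
      ‖u'‖ = 1 → ‖v'‖ = 1 → ‖w'‖ = 1 →
      ⟪v', w'⟫ = Real.cos l₁ → ⟪u', w'⟫ = Real.cos l₂ → ⟪u', v'⟫ = Real.cos l₃ →
      ∃ f : EuclideanSpace ℝ (Fin 3) ≃ₗᵢ[ℝ] EuclideanSpace ℝ (Fin 3),
        f u = u' ∧ f v = v' ∧ f w = w') := by
  have hG := gram_pos l₁ l₂ l₃ h₁ h₂ h₃ t₁ t₂ t₃ hsum
  constructor
  · have hs₃ : 0 < Real.sin l₃ := Real.sin_pos_of_pos_of_lt_pi h₃.1 h₃.2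
    have hc₃ : Real.cos l₃ ^ 2 + Real.sin l₃ ^ 2 = 1 := Real.cos_sq_add_sin_sq l₃
    obtain ⟨u, v, w, hu, hv, hw, hvw, huw, huv⟩ :=
      exists_triple (Real.cos l₁) (Real.cos l₂) (Real.cos l₃) (Real.sin l₃) hs₃ hc₃ hG
    exact ⟨u, v, w, hu, hv, hw,
      li_of_gram _ _ _ hG.ne' u v w hu hv hw hvw huw huv, hvw, huw, huv⟩
  · intro u v w u' v' w' hu hv hw hvw huw huv hu' hv' hw' hvw' huw' huv'
    exact unique_triple _ _ _ hG.ne' u v w u' v' w' hu hv hw hvw huw huv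
      hu' hv' hw' hvw' huw' huv'
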